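/- (Theorem 1(iii), upper tail bound.) Suppose ω(x) = x, f is bounded above by M = f(0) < ∞, and ∫_0^∞ u g(u) du < ∞. Then for every λ ≠ 0, the BTV(1,1) prior satisfies π(λ) = 2 ∫_0^∞ x f(x) g(λ x) dx ≤ (2M/λ²) ∫_0^∞ u g(u) du. -/

import Mathlib

open MeasureTheory Real

/-- Theorem 1(iii), upper tail bound: with ω(x) = x,
f bounded by M = f(0) and ∫_0^∞ u g(u) du < ∞, the BTV(1,1) prior satisfies
π(λ) ≤ (2M/λ²) ∫_0^∞ u g(u) du for all λ ≠ 0. -/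
theorem BTV_one_one_upper_tail_bound
    (f g : ℝ → ℝ) (M : ℝ)
    (hf_meas : Measurable f) (hf_nonneg : ∀ x, 0 ≤ f x)
    (hf_int : Integrable f) (hf_one : ∫ x, f x = 1)
    (hf_even : ∀ x, f (-x) = f x)
    (hM : f 0 = M) (hf_bdd : ∀ x, f x ≤ M)
    (hg_meas : Measurable g) (hg_nonneg : ∀ t, 0 ≤ g t)
    (hg_int : Integrable g) (hg_one : ∫ t, g t = 1)
    (hg_even : ∀ t, g (-t) = g t)
    (hg_bdd : ∃ C : ℝ, ∀ t, g t ≤ C)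
    (hug_int : IntegrableOn (fun u => u * g u) (Set.Ioi 0))
    (l : ℝ) (hl : l ≠ 0) :
    2 * ∫ x in Set.Ioi (0 : ℝ), x * f x * g (l * x)
      ≤ (2 * M / l ^ 2) * ∫ u in Set.Ioi (0 : ℝ), u * g u := by
  set c := |l| with hc_def
  have hc : 0 < c := abs_pos.mpr hl
  have hM0 : 0 ≤ M := hM ▸ hf_nonneg 0
  have hgl : ∀ x, g (l * x) = g (c * x) := by
    intro x
    rcases abs_choice l with h | h
    · rw [hc_def, h]
    · rw [hc_def, h, neg_mul, hg_even]
  -- integrability of x ↦ (c*x) * g (c*x) on Ioi 0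
  have hF : IntegrableOn (fun x => (c * x) * g (c * x)) (Set.Ioi 0) := by
    have := (integrableOn_Ioi_comp_mul_left_iff (fun u => u * g u) 0 hc).mpr
    simpa using this (by simpa using hug_int)
  have hFc : IntegrableOn (fun x => x * g (c * x)) (Set.Ioi 0) := by
    have : IntegrableOn (fun x => c⁻¹ * ((c * x) * g (c * x))) (Set.Ioi 0) := hF.const_mul _
    refine this.congr_fun (fun x _ => ?_) measurableSet_Ioi
    field_simp
  -- pointwise bound and integrability of the integrand
  have hle : ∀ x ∈ Set.Ioi (0:ℝ), x * f x * g (l * x) ≤ M * (x * g (c * x)) := by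
    intro x hx
    rw [hgl x]
    have hx0 : (0:ℝ) ≤ x := (le_of_lt hx)
    calc x * f x * g (c * x) ≤ x * M * g (c * x) := by
          apply mul_le_mul_of_nonneg_right (mul_le_mul_of_nonneg_left (hf_bdd x) hx0) (hg_nonneg _)
      _ = M * (x * g (c * x)) := by ring
  have hint : IntegrableOn (fun x => x * f x * g (l * x)) (Set.Ioi 0) := by
    refine Integrable.mono' ((hFc.const_mul M)) ?_ ?_
    · exact ((measurable_id.mul hf_meas).mul (hg_meas.comp (measurable_const.mul measurable_id))).aestronglyMeasurable
    · filter_upwards [ae_restrict_mem measurableSet_Ioi] with x hx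
      rw [Real.norm_of_nonneg (mul_nonneg (mul_nonneg (le_of_lt hx) (hf_nonneg x)) (hg_nonneg _))]
      exact hle x hx
  -- change of variables equality
  have hCV : ∫ x in Set.Ioi (0:ℝ), x * g (c * x) = c⁻¹ * c⁻¹ * ∫ u in Set.Ioi (0:ℝ), u * g u := by
    have h1 : ∫ x in Set.Ioi (0:ℝ), (fun u => u * g u) (c * x)
        = c⁻¹ • ∫ u in Set.Ioi (c * 0), u * g u := integral_comp_mul_left_Ioi (fun u => u * g u) 0 hc
    have h2 : ∫ x in Set.Ioi (0:ℝ), x * g (c * x)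
        = c⁻¹ * ∫ x in Set.Ioi (0:ℝ), (c * x) * g (c * x) := by
      rw [← integral_const_mul]
      refine setIntegral_congr_fun measurableSet_Ioi (fun x _ => ?_)
      field_simp
    rw [h2]
    simp only [mul_zero] at h1
    rw [show (fun x => (c * x) * g (c * x)) = (fun x => (fun u => u * g u) (c * x)) from rfl] at *
    rw [h1, smul_eq_mul]
    ring
  have hmono : ∫ x in Set.Ioi (0:ℝ), x * f x * g (l * x)
      ≤ ∫ x in Set.Ioi (0:ℝ), M * (x * g (c * x)) :=
    setIntegral_mono_on hint (hFc.const_mul M) measurableSet_Ioi hle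
  have hrhs : ∫ x in Set.Ioi (0:ℝ), M * (x * g (c * x))
      = (M / l ^ 2) * ∫ u in Set.Ioi (0:ℝ), u * g u := by
    rw [integral_const_mul, hCV]
    have hcc : c * c = l ^ 2 := by
      rw [hc_def, ← abs_mul, ← sq, abs_of_nonneg (sq_nonneg l)]
    rw [show c⁻¹ * c⁻¹ = (l ^ 2)⁻¹ by rw [← mul_inv, hcc], div_eq_mul_inv]
    ring
  have h2 : 2 * M / l ^ 2 = 2 * (M / l ^ 2) := by ring
  rw [h2]
  linarith [hmono, hrhs]
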